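/- For p ∈ (0,1) and K = (1 + (1−p)·p^{p/(1−p)})^{-1}, the identity log₂(p(1−K)/((1−p)K)) − 2p·log₂(p(1−K)/((1−p)K)) − log₂(p(1−p)K/(1−K)) = 0 holds. -/

import Mathlib

open Real

/-- For `p ∈ (0,1)` and `K = (1 + (1−p)p^{p/(1−p)})⁻¹`,
`log₂(p(1−K)/((1−p)K)) − 2p·log₂(p(1−K)/((1−p)K)) − log₂(p(1−p)K/(1−K)) = 0`. -/
theorem POST_algebraic_identity
    (p K : ℝ) (hp : p ∈ Set.Ioo (0:ℝ) 1)
    (hK : K = (1 + (1 - p) * p ^ (p / (1 - p)))⁻¹) :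
    Real.logb 2 (p * (1 - K) / ((1 - p) * K))
      - 2 * p * Real.logb 2 (p * (1 - K) / ((1 - p) * K))
      - Real.logb 2 (p * (1 - p) * K / (1 - K)) = 0 := by
  obtain ⟨hp0, hp1⟩ := hp
  have h1p : (0:ℝ) < 1 - p := by linarith
  set a : ℝ := p ^ (p / (1 - p)) with ha_def
  have ha : 0 < a := Real.rpow_pos_of_pos hp0 _
  have hr : 0 < (1 - p) * a := mul_pos h1p ha
  have h1r : 0 < 1 + (1 - p) * a := by linarith
  have hK0 : 0 < K := by rw [hK]; positivity
  have h1K : 1 - K = (1 - p) * a * K := by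
    rw [hK]
    field_simp
    ring
  have e1 : p * (1 - K) / ((1 - p) * K) = p ^ ((1:ℝ) / (1 - p)) := by
    rw [h1K]
    have : p * ((1 - p) * a * K) / ((1 - p) * K) = p * a := by
      field_simp
    rw [this, ha_def]
    have h : (1:ℝ) / (1 - p) = 1 + p / (1 - p) := by field_simp; ring
    rw [h, Real.rpow_add hp0, Real.rpow_one]
  have e2 : p * (1 - p) * K / (1 - K) = p ^ ((1 - 2 * p) / (1 - p)) := by
    rw [h1K]
    have : p * (1 - p) * K / ((1 - p) * a * K) = p / a := by
      field_simp
    rw [this, ha_def]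
    have h : (1 - 2 * p) / (1 - p) = 1 - p / (1 - p) := by field_simp; ring
    rw [h, Real.rpow_sub hp0, Real.rpow_one]
  rw [e1, e2]
  unfold Real.logb
  rw [Real.log_rpow hp0, Real.log_rpow hp0]
  have hlog2 : Real.log 2 ≠ 0 := ne_of_gt (Real.log_pos (by norm_num))
  field_simp
  ring
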